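/- arXiv:1406.5370 — 7 statements merged into one kernel-verified Lean document; each statement's English description precedes it below -/
import Mathlib

section
/- Let C be the identity-ranking comparison matrix and Ĉ the matrix obtained by flipping the sign of the single comparison (i,j) with i < j. Let S and Ŝ be the corresponding similarity matrices S = (n𝟙𝟙ᵀ + CCᵀ)/2. Then Ŝ_{i,j} = S_{i,j}, Ŝ_{s,t} = S_{s,t} for all pairs with {s,t} ∩ {i,j} = ∅, and for t ∉ {i,j}: Ŝ_{i,t} = S_{i,t} - 1 if t < j, Ŝ_{i,t} = S_{i,t} + 1 if t > j; Ŝ_{j,t} = S_{j,t} + 1 if t < i, Ŝ_{j,t} = S_{j,t} - 1 if t > i. -/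
/-- Effect of one flipped comparison `(i, j)` (with `i < j`) on the
similarity matrix `S = (n 𝟙𝟙ᵀ + C Cᵀ)/2`. -/
theorem one_corruption_similarity (n : ℕ) (C Chat : Fin n → Fin n → ℝ)
    (i j : Fin n) (hij : i < j)
    (hC : ∀ s t : Fin n, C s t = if t ≤ s then 1 else -1)
    (hChat_flip₁ : Chat i j = -C i j) (hChat_flip₂ : Chat j i = -C j i)
    (hChat : ∀ s t : Fin n, ¬((s = i ∧ t = j) ∨ (s = j ∧ t = i)) → Chat s t = C s t)
    (S Shat : Fin n → Fin n → ℝ)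
    (hS : ∀ s t : Fin n, S s t = ((n : ℝ) + ∑ k : Fin n, C s k * C t k) / 2)
    (hShat : ∀ s t : Fin n, Shat s t = ((n : ℝ) + ∑ k : Fin n, Chat s k * Chat t k) / 2) :
    Shat i j = S i j ∧
    (∀ s t : Fin n, s ≠ i → s ≠ j → t ≠ i → t ≠ j → Shat s t = S s t) ∧
    (∀ t : Fin n, t ≠ i → t ≠ j →
      (t < j → Shat i t = S i t - 1) ∧ (j < t → Shat i t = S i t + 1) ∧
      (t < i → Shat j t = S j t + 1) ∧ (i < t → Shat j t = S j t - 1)) := by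
  have hne : i ≠ j := ne_of_lt hij
  have hCii : C i i = 1 := by rw [hC]; simp
  have hCjj : C j j = 1 := by rw [hC]; simp
  have hCij : C i j = -1 := by rw [hC]; simp [not_le.mpr hij]
  have hCji : C j i = 1 := by rw [hC]; simp [le_of_lt hij]
  have hChat_i : ∀ k : Fin n, k ≠ j → Chat i k = C i k := by
    intro k hk; apply hChat; rintro (⟨_, h⟩ | ⟨h, _⟩); exacts [hk h, hne h]
  have hChat_j : ∀ k : Fin n, k ≠ i → Chat j k = C j k := by
    intro k hk; apply hChat; rintro (⟨h, _⟩ | ⟨_, h⟩); exacts [hne h.symm, hk h]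
  have hChat_other : ∀ s : Fin n, s ≠ i → s ≠ j → ∀ k, Chat s k = C s k := by
    intro s hsi hsj k; apply hChat; rintro (⟨h, _⟩ | ⟨h, _⟩); exacts [hsi h, hsj h]
  refine ⟨?_, ?_, ?_⟩
  · have hsum : ∑ k : Fin n, (Chat i k * Chat j k - C i k * C j k) = 0 := by
      rw [Finset.sum_eq_add_of_mem i j (Finset.mem_univ i) (Finset.mem_univ j) hne ?_]
      · rw [hChat_i i hne, hChat_flip₂, hChat_flip₁, hChat_j j hne.symm,
          hCii, hCjj, hCij, hCji]
        ring
      · intro k _ ⟨hki, hkj⟩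
        rw [hChat_i k hkj, hChat_j k hki]
        ring
    rw [Finset.sum_sub_distrib, sub_eq_zero] at hsum
    rw [hShat, hS, hsum]
  · intro s t hsi hsj hti htj
    rw [hShat, hS]
    congr 2
    exact Finset.sum_congr rfl fun k _ => by
      rw [hChat_other s hsi hsj, hChat_other t hti htj]
  · intro t hti htj
    have key_i : ∑ k : Fin n, Chat i k * Chat t k
        = (∑ k : Fin n, C i k * C t k) + 2 * C t j := by
      have hsum : ∑ k : Fin n, (Chat i k * Chat t k - C i k * C t k) = 2 * C t j := by
        rw [Finset.sum_eq_single j]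
        · rw [hChat_flip₁, hChat_other t hti htj, hCij]; ring
        · intro k _ hkj
          rw [hChat_i k hkj, hChat_other t hti htj]; ring
        · intro h; exact absurd (Finset.mem_univ j) h
      rw [Finset.sum_sub_distrib] at hsum
      linarith
    have key_j : ∑ k : Fin n, Chat j k * Chat t k
        = (∑ k : Fin n, C j k * C t k) - 2 * C t i := by
      have hsum : ∑ k : Fin n, (Chat j k * Chat t k - C j k * C t k) = -(2 * C t i) := by
        rw [Finset.sum_eq_single i]
        · rw [hChat_flip₂, hChat_other t hti htj, hCji]; ring
        · intro k _ hki
          rw [hChat_j k hki, hChat_other t hti htj]; ring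
        · intro h; exact absurd (Finset.mem_univ i) h
      rw [Finset.sum_sub_distrib] at hsum
      linarith
    refine ⟨?_, ?_, ?_, ?_⟩
    · intro h
      have hv : C t j = -1 := by rw [hC]; simp [not_le.mpr h]
      rw [hShat, hS, key_i, hv]; ring
    · intro h
      have hv : C t j = 1 := by rw [hC]; simp [le_of_lt h]
      rw [hShat, hS, key_i, hv]; ring
    · intro h
      have hv : C t i = -1 := by rw [hC]; simp [not_le.mpr h]
      rw [hShat, hS, key_j, hv]; ring
    · intro h
      have hv : C t i = 1 := by rw [hC]; simp [le_of_lt h]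
      rw [hShat, hS, key_j, hv]; ring
end

section
/- Let C be the identity-ranking comparison matrix of size n and C̃ the matrix obtained by setting one comparison (i,j) to 0 (missing), with j - i > 1. Then the similarity matrix S̃ = (n𝟙𝟙ᵀ + C̃C̃ᵀ)/2 satisfies strict Robinson inequalities (entries strictly decrease away from the diagonal), and the point score vector w̃_k = Σ_l C̃_{l,k} is strictly monotonic. -/
set_option maxHeartbeats 4000000


/-- If one comparison `(i, j)` with `j - i > 1` is missing (set to
`0`), the similarity matrix `S̃ = (n 𝟙𝟙ᵀ + C̃ C̃ᵀ)/2` satisfies strict Robinson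
inequalities and the point score vector is strictly monotonic (decreasing). -/
theorem one_missing_similarity_strictR (n : ℕ) (C Ctil : Fin n → Fin n → ℝ)
    (i j : Fin n) (hij : (i : ℕ) + 1 < (j : ℕ))
    (hC : ∀ s t : Fin n, C s t = if t ≤ s then 1 else -1)
    (hCtil_miss₁ : Ctil i j = 0) (hCtil_miss₂ : Ctil j i = 0)
    (hCtil : ∀ s t : Fin n, ¬((s = i ∧ t = j) ∨ (s = j ∧ t = i)) → Ctil s t = C s t)
    (Stil : Fin n → Fin n → ℝ)
    (hStil : ∀ s t : Fin n, Stil s t = ((n : ℝ) + ∑ k : Fin n, Ctil s k * Ctil t k) / 2)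
    (wtil : Fin n → ℝ)
    (hwtil : ∀ k : Fin n, wtil k = ∑ l : Fin n, Ctil l k) :
    (∀ s t : Fin n, Stil s t = Stil t s) ∧
    (∀ s t tp : Fin n, t < s → (tp : ℕ) = (t : ℕ) + 1 → Stil s t < Stil s tp) ∧
    (∀ s sp t : Fin n, t < s → (sp : ℕ) = (s : ℕ) + 1 → Stil sp t < Stil s t) ∧
    (∀ k l : Fin n, k < l → wtil l < wtil k) := by
  have hne : i ≠ j := by
    intro h
    rw [Fin.ext_iff] at h
    omega
  have hilt : i < j := by
    rw [Fin.lt_def]; omega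
  have hCti : ∀ x : Fin n, x ≠ j → Ctil x i = C x i := by
    intro x hx
    refine hCtil x i ?_
    rintro (⟨-, h⟩ | ⟨h, -⟩)
    · exact hne h
    · exact hx h
  have hCtj : ∀ x : Fin n, x ≠ i → Ctil x j = C x j := by
    intro x hx
    refine hCtil x j ?_
    rintro (⟨h, -⟩ | ⟨-, h⟩)
    · exact hx h
    · exact hne h.symm
  -- ±1 sum lemma
  have sumpm : ∀ S : Finset (Fin n),
      ∑ k : Fin n, (if k ∈ S then (-1:ℝ) else 1) = (n:ℝ) - 2 * S.card := by
    intro S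
    rw [Finset.sum_ite, Finset.sum_const, Finset.sum_const]
    simp only [Finset.filter_mem_eq_inter, Finset.univ_inter, nsmul_eq_mul]
    have h1 : (Finset.univ.filter (fun k => k ∉ S)).card = n - S.card := by
      rw [Finset.filter_not, Finset.card_sdiff_of_subset (Finset.filter_subset _ _)]
      simp [Finset.filter_mem_eq_inter]
    rw [h1]
    have h2 : S.card ≤ n := by simpa using Finset.card_le_card (Finset.subset_univ S)
    push_cast [Nat.cast_sub h2]
    ring
  -- base similarity sum
  have fsum : ∀ s t : Fin n, t ≤ s →
      ∑ k : Fin n, C s k * C t k = (n:ℝ) - 2 * (s:ℕ) + 2 * (t:ℕ) := by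
    intro s t hts
    have hterm : ∀ k : Fin n, C s k * C t k = if k ∈ Finset.Ioc t s then (-1:ℝ) else 1 := by
      intro k
      rw [hC, hC]
      by_cases h1 : k ≤ t
      · rw [if_pos (le_trans h1 hts), if_pos h1,
          if_neg (by rw [Finset.mem_Ioc]; rintro ⟨h, -⟩; exact absurd h1 (not_le.mpr h))]
        norm_num
      · by_cases h2 : k ≤ s
        · rw [if_pos h2, if_neg h1, if_pos (Finset.mem_Ioc.mpr ⟨not_le.mp h1, h2⟩)]
          norm_num
        · rw [if_neg h2, if_neg h1, if_neg (by rw [Finset.mem_Ioc]; rintro ⟨-, h⟩; exact h2 h)]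
          norm_num
    rw [Finset.sum_congr rfl (fun k _ => hterm k), sumpm, Fin.card_Ioc]
    have hts' : (t:ℕ) ≤ s := hts
    push_cast [Nat.cast_sub hts']
    ring
  -- correction decomposition
  have gsum : ∀ s t : Fin n, ∑ k : Fin n, Ctil s k * Ctil t k =
      (∑ k : Fin n, C s k * C t k) +
      ((Ctil s i * Ctil t i - C s i * C t i) + (Ctil s j * Ctil t j - C s j * C t j)) := by
    intro s t
    have key : ∑ k ∈ ({i, j} : Finset (Fin n)), (Ctil s k * Ctil t k - C s k * C t k)
        = ∑ k : Fin n, (Ctil s k * Ctil t k - C s k * C t k) := by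
      apply Finset.sum_subset (Finset.subset_univ _)
      intro k _ hk
      simp only [Finset.mem_insert, Finset.mem_singleton, not_or] at hk
      rw [hCtil s k (by rintro (⟨-, h⟩ | ⟨-, h⟩); exacts [hk.2 h, hk.1 h]),
        hCtil t k (by rintro (⟨-, h⟩ | ⟨-, h⟩); exacts [hk.2 h, hk.1 h])]
      ring
    have h2 : ∑ k : Fin n, Ctil s k * Ctil t k - ∑ k : Fin n, C s k * C t k
        = (Ctil s i * Ctil t i - C s i * C t i) + (Ctil s j * Ctil t j - C s j * C t j) := by
      rw [← Finset.sum_sub_distrib, ← key, Finset.sum_pair hne]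
    linarith
  have hCji : C j i = 1 := by rw [hC, if_pos hilt.le]
  have hCij : C i j = -1 := by rw [hC, if_neg (not_le.mpr hilt)]
  -- correction values
  have corri : ∀ s t : Fin n, Ctil s i * Ctil t i - C s i * C t i =
      if s = j then (if t = j then (-1:ℝ) else -C t i) else if t = j then -C s i else 0 := by
    intro s t
    by_cases hs : s = j
    · rw [if_pos hs, hs]
      by_cases ht : t = j
      · rw [if_pos ht, ht, hCtil_miss₂, hCji]; ring
      · rw [if_neg ht, hCtil_miss₂, hCji]; ring
    · rw [if_neg hs]
      by_cases ht : t = j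
      · rw [if_pos ht, ht, hCti s hs, hCtil_miss₂, hCji]; ring
      · rw [if_neg ht, hCti s hs, hCti t ht]; ring
  have corrj : ∀ s t : Fin n, Ctil s j * Ctil t j - C s j * C t j =
      if s = i then (if t = i then (-1:ℝ) else C t j) else if t = i then C s j else 0 := by
    intro s t
    by_cases hs : s = i
    · rw [if_pos hs, hs]
      by_cases ht : t = i
      · rw [if_pos ht, ht, hCtil_miss₁, hCij]; ring
      · rw [if_neg ht, hCtil_miss₁, hCij]; ring
    · rw [if_neg hs]
      by_cases ht : t = i
      · rw [if_pos ht, ht, hCtj s hs, hCtil_miss₁, hCij]; ring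
      · rw [if_neg ht, hCtj s hs, hCtj t ht]; ring
  refine ⟨?_, ?_, ?_, ?_⟩
  · -- symmetry
    intro s t
    rw [hStil, hStil]
    rw [Finset.sum_congr rfl (fun k _ => mul_comm (Ctil s k) (Ctil t k))]
  · -- row inequality
    intro s t tp hts htp
    have hts' : (t:ℕ) < (s:ℕ) := hts
    have h1 : t ≤ s := hts.le
    have h2 : tp ≤ s := by rw [Fin.le_def]; omega
    rw [hStil, hStil, gsum, gsum, fsum s t h1, fsum s tp h2, corri, corri, corrj, corrj]
    simp only [hC]
    have hir : ((tp:ℕ):ℝ) = ((t:ℕ):ℝ) + 1 := by exact_mod_cast htp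
    simp only [Fin.ext_iff, Fin.le_def]
    split_ifs <;> first | (exfalso; omega) | linarith
  · -- column inequality
    intro s sp t hts hsp
    have hts' : (t:ℕ) < (s:ℕ) := hts
    have h1 : t ≤ s := hts.le
    have h2 : t ≤ sp := by rw [Fin.le_def]; omega
    rw [hStil, hStil, gsum, gsum, fsum s t h1, fsum sp t h2, corri, corri, corrj, corrj]
    simp only [hC]
    have hir : ((sp:ℕ):ℝ) = ((s:ℕ):ℝ) + 1 := by exact_mod_cast hsp
    simp only [Fin.ext_iff, Fin.le_def]
    split_ifs <;> first | (exfalso; omega) | linarith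
  · -- point scores
    intro k l hkl
    have base : ∀ m : Fin n, ∑ l : Fin n, C l m = (n:ℝ) - 2 * (m:ℕ) := by
      intro m
      have hterm : ∀ x : Fin n, C x m = if x ∈ Finset.Iio m then (-1:ℝ) else 1 := by
        intro x
        rw [hC]
        rcases le_or_gt m x with h | h
        · rw [if_pos h, if_neg (by rw [Finset.mem_Iio]; exact not_lt.mpr h)]
        · rw [if_neg (not_le.mpr h), if_pos (Finset.mem_Iio.mpr h)]
      rw [Finset.sum_congr rfl (fun x _ => hterm x), sumpm, Fin.card_Iio]
    have wval : ∀ m : Fin n, wtil m =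
        (n:ℝ) - 2 * (m:ℕ) + ((if m = j then (1:ℝ) else 0) + (if m = i then (-1:ℝ) else 0)) := by
      intro m
      have key : ∑ x ∈ ({i, j} : Finset (Fin n)), (Ctil x m - C x m)
          = ∑ x : Fin n, (Ctil x m - C x m) := by
        apply Finset.sum_subset (Finset.subset_univ _)
        intro x _ hx
        simp only [Finset.mem_insert, Finset.mem_singleton, not_or] at hx
        rw [hCtil x m (by rintro (⟨h, -⟩ | ⟨h, -⟩); exacts [hx.1 h, hx.2 h])]
        ring
      have hik : Ctil i m - C i m = if m = j then (1:ℝ) else 0 := by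
        by_cases h : m = j
        · subst h; rw [if_pos rfl, hCtil_miss₁, hCij]; ring
        · rw [if_neg h, hCtil i m (by rintro (⟨-, hh⟩ | ⟨hh, -⟩); exacts [h hh, hne hh])]
          ring
      have hjk : Ctil j m - C j m = if m = i then (-1:ℝ) else 0 := by
        by_cases h : m = i
        · subst h; rw [if_pos rfl, hCtil_miss₂, hCji]; ring
        · rw [if_neg h, hCtil j m (by rintro (⟨hh, -⟩ | ⟨-, hh⟩); exacts [hne hh.symm, h hh])]
          ring
      have h2 : ∑ x : Fin n, Ctil x m - ∑ x : Fin n, C x m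
          = (Ctil i m - C i m) + (Ctil j m - C j m) := by
        rw [← Finset.sum_sub_distrib, ← key, Finset.sum_pair hne]
      rw [hik, hjk] at h2
      have hb := base m
      rw [hwtil]
      linarith
    rw [wval, wval]
    have hkl' : (k:ℕ) + 1 ≤ (l:ℕ) := hkl
    clear hkl
    simp only [Fin.ext_iff]
    split_ifs <;> first | (exfalso; omega) | (rify at *; linarith)
end

section
/- Let S be the n×n matrix S_{i,j} = n - |i-j|, D = diag(S𝟙) its degree matrix, and x the vector with x_i = i - (n+1)/2. Then S x = (1/3) D x; equivalently, x is an eigenvector of the normalized Laplacian L = I - D^{-1}S with eigenvalue 2/3. -/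
lemma sum_quad (p q r : ℝ) (a : ℕ) :
    ∑ k ∈ Finset.range a, (p * (k:ℝ)^2 + q * (k:ℝ) + r)
      = p * ((a:ℝ) * ((a:ℝ) - 1) * (2 * (a:ℝ) - 1) / 6)
        + q * ((a:ℝ) * ((a:ℝ) - 1) / 2) + r * (a:ℝ) := by
  induction a with
  | zero => simp
  | succ m ih =>
      rw [Finset.sum_range_succ, ih]
      push_cast
      ring

lemma key (n i : ℕ) (hi : i < n) :
    (∑ k ∈ Finset.range n, ((n:ℝ) - |(i:ℝ) - (k:ℝ)|) * (((k:ℝ) + 1) - ((n:ℝ) + 1) / 2))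
      = 1 / 3 * ((∑ k ∈ Finset.range n, ((n:ℝ) - |(i:ℝ) - (k:ℝ)|)) * (((i:ℝ) + 1) - ((n:ℝ) + 1) / 2)) := by
  have hii : i + 1 ≤ n := hi
  have habs1 : ∀ k ∈ Finset.range (i+1), |(i:ℝ) - (k:ℝ)| = (i:ℝ) - (k:ℝ) := by
    intro k hk
    have hk' : k ≤ i := Nat.lt_succ_iff.mp (Finset.mem_range.mp hk)
    have : (k:ℝ) ≤ (i:ℝ) := by exact_mod_cast hk'
    exact abs_of_nonneg (by linarith)
  have habs2 : ∀ k ∈ Finset.Ico (i+1) n, |(i:ℝ) - (k:ℝ)| = (k:ℝ) - (i:ℝ) := by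
    intro k hk
    have hk' : i + 1 ≤ k := (Finset.mem_Ico.mp hk).1
    have : (i:ℝ) + 1 ≤ (k:ℝ) := by exact_mod_cast hk'
    rw [abs_of_nonpos (by linarith)]; ring
  have h1 : ∑ k ∈ Finset.range (i+1), ((n:ℝ) - |(i:ℝ) - (k:ℝ)|) * (((k:ℝ) + 1) - ((n:ℝ) + 1) / 2)
      = ∑ k ∈ Finset.range (i+1),
          (1 * (k:ℝ)^2 + ((n:ℝ) - (i:ℝ) + (1 - (n:ℝ))/2) * (k:ℝ)
            + ((n:ℝ) - (i:ℝ)) * ((1 - (n:ℝ))/2)) := by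
    refine Finset.sum_congr rfl fun k hk => ?_
    rw [habs1 k hk]; ring
  have h2 : ∑ k ∈ Finset.Ico (i+1) n, ((n:ℝ) - |(i:ℝ) - (k:ℝ)|) * (((k:ℝ) + 1) - ((n:ℝ) + 1) / 2)
      = ∑ k ∈ Finset.Ico (i+1) n,
          ((-1) * (k:ℝ)^2 + ((n:ℝ) + (i:ℝ) - (1 - (n:ℝ))/2) * (k:ℝ)
            + ((n:ℝ) + (i:ℝ)) * ((1 - (n:ℝ))/2)) := by
    refine Finset.sum_congr rfl fun k hk => ?_
    rw [habs2 k hk]; ring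
  have g1 : ∑ k ∈ Finset.range (i+1), ((n:ℝ) - |(i:ℝ) - (k:ℝ)|)
      = ∑ k ∈ Finset.range (i+1), ((0:ℝ) * (k:ℝ)^2 + 1 * (k:ℝ) + ((n:ℝ) - (i:ℝ))) := by
    refine Finset.sum_congr rfl fun k hk => ?_
    rw [habs1 k hk]; ring
  have g2 : ∑ k ∈ Finset.Ico (i+1) n, ((n:ℝ) - |(i:ℝ) - (k:ℝ)|)
      = ∑ k ∈ Finset.Ico (i+1) n, ((0:ℝ) * (k:ℝ)^2 + (-1) * (k:ℝ) + ((n:ℝ) + (i:ℝ))) := by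
    refine Finset.sum_congr rfl fun k hk => ?_
    rw [habs2 k hk]; ring
  have h3 := Finset.sum_range_add_sum_Ico
      (fun k => (-1) * (k:ℝ)^2 + ((n:ℝ) + (i:ℝ) - (1 - (n:ℝ))/2) * (k:ℝ)
            + ((n:ℝ) + (i:ℝ)) * ((1 - (n:ℝ))/2)) hii
  have g3 := Finset.sum_range_add_sum_Ico
      (fun k => (0:ℝ) * (k:ℝ)^2 + (-1) * (k:ℝ) + ((n:ℝ) + (i:ℝ))) hii
  rw [sum_quad, sum_quad] at h3
  rw [sum_quad, sum_quad] at g3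
  rw [← Finset.sum_range_add_sum_Ico _ hii, ← Finset.sum_range_add_sum_Ico _ hii,
      h1, h2, g1, g2, sum_quad, sum_quad]
  push_cast at h3 g3 ⊢
  linear_combination h3 - (((i:ℝ) + 1 - ((n:ℝ) + 1) / 2) / 3) * g3

/-- The linear vector `x i = i - (n+1)/2` (1-indexed) satisfies
`S x = (1/3) D x`, i.e. it is an eigenvector of the normalized Laplacian
`I - D⁻¹ S` with eigenvalue `2/3`. -/
theorem linear_vector_eigen (n : ℕ) (S : Fin n → Fin n → ℝ)
    (hS : ∀ i j : Fin n, S i j = (n : ℝ) - |(i : ℝ) - (j : ℝ)|)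
    (d : Fin n → ℝ) (hd : ∀ i : Fin n, d i = ∑ k : Fin n, S i k)
    (x : Fin n → ℝ) (hx : ∀ i : Fin n, x i = ((i : ℝ) + 1) - ((n : ℝ) + 1) / 2) :
    ∀ i : Fin n, ∑ k : Fin n, S i k * x k = (1 / 3) * (d i * x i) := by
  intro i
  have K := key n i i.isLt
  simp only [hS, hd, hx]
  rw [Fin.sum_univ_eq_sum_range (fun k => ((n:ℝ) - |(i:ℝ) - (k:ℝ)|) * (((k:ℝ) + 1) - ((n:ℝ) + 1) / 2)) n,
      Fin.sum_univ_eq_sum_range (fun k => ((n:ℝ) - |(i:ℝ) - (k:ℝ)|)) n]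
  exact K
end

section
/- Let S be the n×n matrix S_{i,j} = n - |i-j| and L = diag(S𝟙) - S its unnormalized Laplacian. Let v ∈ ℝⁿ be the vector with v_1 = v_n = α, v_i = -β for 1 < i < n, where α, β > 0 are chosen so that vᵀ𝟙 = 0 and ‖v‖₂ = 1. Then L v = (n(n+1)/2) v. -/
/-- For the unnormalized Laplacian `L = diag(S𝟙) - S` of
`S i j = n - |i - j|`, the vector with value `α` on the endpoints and `-β`
in the middle (zero sum, unit norm) is an eigenvector with eigenvalue
`n(n+1)/2`. -/
theorem third_eigenvector (n : ℕ) (hn : 3 ≤ n) (S : Fin n → Fin n → ℝ)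
    (hS : ∀ i j : Fin n, S i j = (n : ℝ) - |(i : ℝ) - (j : ℝ)|)
    (d : Fin n → ℝ) (hd : ∀ i : Fin n, d i = ∑ k : Fin n, S i k)
    (α β : ℝ) (hα : 0 < α) (hβ : 0 < β)
    (hsum : 2 * α = ((n : ℝ) - 2) * β)
    (hnorm : 2 * α ^ 2 + ((n : ℝ) - 2) * β ^ 2 = 1)
    (v : Fin n → ℝ)
    (hv : ∀ i : Fin n, v i = if (i : ℕ) = 0 ∨ (i : ℕ) = n - 1 then α else -β) :
    ∀ i : Fin n, d i * v i - ∑ k : Fin n, S i k * v k =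
      ((n : ℝ) * ((n : ℝ) + 1) / 2) * v i := by
  intro i
  have hn' : (3:ℝ) ≤ (n:ℝ) := by exact_mod_cast hn
  set z : Fin n := ⟨0, by omega⟩ with hz
  set m : Fin n := ⟨n-1, by omega⟩ with hm
  have hzm : z ≠ m := by simp only [hz, hm, ne_eq, Fin.mk.injEq]; omega
  have hmv : ((m : Fin n) : ℝ) = (n:ℝ) - 1 := by
    simp only [hm]
    push_cast [Nat.cast_sub (by omega : 1 ≤ n)]
    ring
  have hzv : ((z : Fin n) : ℝ) = 0 := by simp [hz]
  have hkub : ∀ k : Fin n, ((k : Fin n) : ℝ) ≤ (n:ℝ) - 1 := by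
    intro k
    have := k.isLt
    have : (k : ℕ) ≤ n - 1 := by omega
    have := (Nat.cast_le (α := ℝ)).mpr this
    rw [Nat.cast_sub (by omega : 1 ≤ n)] at this
    simpa using this
  have hknn : ∀ k : Fin n, (0:ℝ) ≤ ((k : Fin n) : ℝ) := fun k => Nat.cast_nonneg _
  -- values of S at endpoints columns
  have hSz : ∀ j : Fin n, S j z = (n:ℝ) - j := by
    intro j
    rw [hS, hzv, sub_zero, abs_of_nonneg (hknn j)]
  have hSm : ∀ j : Fin n, S j m = (j:ℝ) + 1 := by
    intro j
    rw [hS, hmv, abs_of_nonpos (by linarith [hkub j])]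
    ring
  -- sum supported on endpoints
  have hvz : v z = α := by rw [hv]; simp [hz]
  have hvm : v m = α := by
    rw [hv, if_pos]; right; simp [hm]
  have hsupp : ∀ k : Fin n, k ∉ ({z, m} : Finset (Fin n)) → S i k * (v k + β) = 0 := by
    intro k hk
    simp only [Finset.mem_insert, Finset.mem_singleton] at hk
    push_neg at hk
    have : v k = -β := by
      rw [hv, if_neg]
      push_neg
      exact ⟨fun h => hk.1 (Fin.ext h), fun h => hk.2 (Fin.ext h)⟩
    simp [this]
  have hkey : ∑ k : Fin n, S i k * (v k + β) = ((n:ℝ) + 1) * (α + β) := by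
    rw [← Finset.sum_subset (Finset.subset_univ ({z, m} : Finset (Fin n)))
        (fun k _ hk => hsupp k hk)]
    rw [Finset.sum_pair hzm, hvz, hvm, hSz, hSm]
    ring
  have hsplit : ∑ k : Fin n, S i k * v k = ((n:ℝ) + 1) * (α + β) - β * d i := by
    have : ∀ k : Fin n, S i k * v k = S i k * (v k + β) - β * S i k := by
      intro k; ring
    rw [Finset.sum_congr rfl (fun k _ => this k), Finset.sum_sub_distrib, hkey,
        ← Finset.mul_sum, ← hd]
  -- Gauss sum
  have hG : ∑ k : Fin n, ((k : Fin n) : ℝ) = (n:ℝ) * ((n:ℝ) - 1) / 2 := by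
    rw [Fin.sum_univ_eq_sum_range (fun k => ((k:ℕ):ℝ)) n]
    have h2 := Finset.sum_range_id_mul_two n
    have h3 := congrArg (Nat.cast (R := ℝ)) h2
    push_cast [Nat.cast_sub (by omega : 1 ≤ n)] at h3
    linarith
  have hcard : ∑ _k : Fin n, (1:ℝ) = (n:ℝ) := by simp
  have hdz : d z = (n:ℝ) * ((n:ℝ) + 1) / 2 := by
    rw [hd]
    have : ∀ k : Fin n, S z k = (n:ℝ) - k := by
      intro k
      rw [hS, hzv, abs_of_nonpos (by linarith [hknn k])]
      ring
    rw [Finset.sum_congr rfl (fun k _ => this k), Finset.sum_sub_distrib, hG]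
    simp
    ring
  have hdm : d m = (n:ℝ) * ((n:ℝ) + 1) / 2 := by
    rw [hd]
    have : ∀ k : Fin n, S m k = (k:ℝ) + 1 := by
      intro k
      rw [hS, hmv, abs_of_nonneg (by linarith [hkub k])]
      ring
    rw [Finset.sum_congr rfl (fun k _ => this k), Finset.sum_add_distrib, hG, hcard]
    ring
  have hα' : α = ((n:ℝ) - 2) * β / 2 := by linarith
  rw [hsplit, hv i]
  by_cases h : (i : ℕ) = 0 ∨ (i : ℕ) = n - 1
  · rw [if_pos h]
    have hdi : d i = (n:ℝ) * ((n:ℝ) + 1) / 2 := by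
      rcases h with h | h
      · have : i = z := Fin.ext (by simp [hz, h])
        rw [this, hdz]
      · have : i = m := Fin.ext (by simp [hm, h])
        rw [this, hdm]
    rw [hdi, hα']
    ring
  · rw [if_neg h, hα']
    ring
end

section
/- Let S be the n×n matrix S_{i,j} = n - |i-j|, L = diag(S𝟙) - S, and let λ₂ be the smallest nonzero eigenvalue of L (the Fiedler value, i.e. the minimum of yᵀLy over unit vectors y orthogonal to 𝟙). Then λ₂ ≤ (2/5)(n² + 1). -/
open Finset

lemma sumPoly (n : ℕ) (a b c e : ℝ) :
    ∑ j ∈ Finset.range n, (a + b*(j:ℝ) + c*(j:ℝ)^2 + e*(j:ℝ)^3) =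
      a*n + b*((n:ℝ)*((n:ℝ)-1)/2) + c*((n:ℝ)*((n:ℝ)-1)*(2*(n:ℝ)-1)/6)
        + e*(((n:ℝ)*((n:ℝ)-1)/2)^2) := by
  induction n with
  | zero => simp
  | succ m ih => rw [Finset.sum_range_succ, ih]; push_cast; ring

lemma T2lem (n : ℕ) :
    ∑ i ∈ Finset.range n, ∑ j ∈ Finset.range n, ((i:ℝ)-(j:ℝ))^2
      = (n:ℝ)^2*((n:ℝ)^2-1)/6 := by
  have inner : ∀ i ∈ Finset.range n, ∑ j ∈ Finset.range n, ((i:ℝ)-(j:ℝ))^2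
      = ((n:ℝ)*((n:ℝ)-1)*(2*(n:ℝ)-1)/6 + (-2*((n:ℝ)*((n:ℝ)-1)/2))*(i:ℝ)
        + (n:ℝ)*(i:ℝ)^2 + 0*(i:ℝ)^3) := by
    intro i _
    have h : ∑ j ∈ Finset.range n, ((i:ℝ)-(j:ℝ))^2
        = ∑ j ∈ Finset.range n, ((i:ℝ)^2 + (-2*(i:ℝ))*(j:ℝ) + 1*(j:ℝ)^2 + 0*(j:ℝ)^3) :=
      Finset.sum_congr rfl (fun j _ => by ring)
    rw [h, sumPoly]; ring
  rw [Finset.sum_congr rfl inner, sumPoly]; ring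

lemma Glem (n : ℕ) :
    ∑ i ∈ Finset.range n, ∑ j ∈ Finset.range n, |(i:ℝ)-(j:ℝ)| * ((i:ℝ)-(j:ℝ))^2
      = (n:ℝ)*((n:ℝ)-1)*(3*(n:ℝ)^3+3*(n:ℝ)^2-2*(n:ℝ)-2)/30 := by
  induction n with
  | zero => simp
  | succ m ih =>
    have hcube : ∑ j ∈ Finset.range m, ((m:ℝ)-(j:ℝ))^3
        = ((m:ℝ)^3*(m:ℝ) + (-3*(m:ℝ)^2)*((m:ℝ)*((m:ℝ)-1)/2)
            + (3*(m:ℝ))*((m:ℝ)*((m:ℝ)-1)*(2*(m:ℝ)-1)/6) + (-1)*(((m:ℝ)*((m:ℝ)-1)/2)^2)) := by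
      have h : ∑ j ∈ Finset.range m, ((m:ℝ)-(j:ℝ))^3
          = ∑ j ∈ Finset.range m, ((m:ℝ)^3 + (-3*(m:ℝ)^2)*(j:ℝ) + (3*(m:ℝ))*(j:ℝ)^2 + (-1)*(j:ℝ)^3) :=
        Finset.sum_congr rfl (fun j _ => by ring)
      rw [h, sumPoly]
    rw [Finset.sum_range_succ]
    have hinner : ∀ i ∈ Finset.range m,
        ∑ j ∈ Finset.range (m+1), |(i:ℝ)-(j:ℝ)| * ((i:ℝ)-(j:ℝ))^2
        = (∑ j ∈ Finset.range m, |(i:ℝ)-(j:ℝ)| * ((i:ℝ)-(j:ℝ))^2) + ((m:ℝ)-(i:ℝ))^3 := by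
      intro i hi
      rw [Finset.sum_range_succ]
      have hi' : (i:ℝ) ≤ (m:ℝ) := by
        exact_mod_cast Nat.le_of_lt (Finset.mem_range.mp hi)
      rw [abs_of_nonpos (by linarith)]
      ring
    rw [Finset.sum_congr rfl hinner, Finset.sum_add_distrib, ih]
    have hlast : ∑ j ∈ Finset.range (m+1), |(m:ℝ)-(j:ℝ)| * ((m:ℝ)-(j:ℝ))^2
        = ∑ j ∈ Finset.range m, ((m:ℝ)-(j:ℝ))^3 := by
      rw [Finset.sum_range_succ]
      have h : ∀ j ∈ Finset.range m, |(m:ℝ)-(j:ℝ)| * ((m:ℝ)-(j:ℝ))^2 = ((m:ℝ)-(j:ℝ))^3 := by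
        intro j hj
        have hj' : (j:ℝ) ≤ (m:ℝ) := by
          exact_mod_cast Nat.le_of_lt (Finset.mem_range.mp hj)
        rw [abs_of_nonneg (by linarith)]; ring
      rw [Finset.sum_congr rfl h]; simp
    have hrefl : ∑ i ∈ Finset.range m, ((m:ℝ)-(i:ℝ))^3 = ∑ j ∈ Finset.range m, ((m:ℝ)-(j:ℝ))^3 := rfl
    rw [hrefl, hlast, hcube]
    push_cast; ring


/-- The Fiedler value of the unnormalized Laplacian of
`S i j = n - |i - j|`, i.e. the infimum of the quadratic form over unit vectors
orthogonal to 𝟙, is at most `(2/5)(n² + 1)`. -/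
theorem fiedler_value_upper_bound (n : ℕ) (S : Fin n → Fin n → ℝ)
    (hS : ∀ i j : Fin n, S i j = (n : ℝ) - |(i : ℝ) - (j : ℝ)|)
    (d : Fin n → ℝ) (hd : ∀ i : Fin n, d i = ∑ k : Fin n, S i k)
    (L : Fin n → Fin n → ℝ)
    (hL : ∀ i j : Fin n, L i j = (if i = j then d i else 0) - S i j) :
    sInf {q : ℝ | ∃ y : Fin n → ℝ, (∑ i : Fin n, y i = 0) ∧
        (∑ i : Fin n, (y i) ^ 2 = 1) ∧ q = ∑ i : Fin n, ∑ j : Fin n, y i * L i j * y j}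
      ≤ (2 / 5) * ((n : ℝ) ^ 2 + 1) := by
  by_cases hb : BddBelow {q : ℝ | ∃ y : Fin n → ℝ, (∑ i : Fin n, y i = 0) ∧
        (∑ i : Fin n, (y i) ^ 2 = 1) ∧ q = ∑ i : Fin n, ∑ j : Fin n, y i * L i j * y j}
  swap
  · rw [Real.sInf_of_not_bddBelow hb]; positivity
  rcases lt_or_ge n 2 with hn | hn
  · have hT : {q : ℝ | ∃ y : Fin n → ℝ, (∑ i : Fin n, y i = 0) ∧
        (∑ i : Fin n, (y i) ^ 2 = 1) ∧ q = ∑ i : Fin n, ∑ j : Fin n, y i * L i j * y j} = ∅ := by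
      ext q
      simp only [Set.mem_setOf_eq, Set.mem_empty_iff_false, iff_false, not_exists]
      rintro y ⟨hy0, hy1, -⟩
      interval_cases n
      · simp at hy1
      · simp only [Fin.sum_univ_one] at hy0 hy1
        rw [hy0] at hy1; norm_num at hy1
    rw [hT, Real.sInf_empty]; positivity
  · have hn2 : (2:ℝ) ≤ (n:ℝ) := by exact_mod_cast hn
    set c : ℝ := ((n:ℝ)-1)/2 with hc
    set x : Fin n → ℝ := fun i => (i:ℝ) - c with hxdef
    -- sum of x is 0
    have hx0 : ∑ i : Fin n, x i = 0 := by
      rw [hxdef]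
      rw [Fin.sum_univ_eq_sum_range (fun k : ℕ => (k:ℝ) - c)]
      have h : ∑ k ∈ Finset.range n, ((k:ℝ) - c)
          = ∑ k ∈ Finset.range n, ((-c) + 1*(k:ℝ) + 0*(k:ℝ)^2 + 0*(k:ℝ)^3) :=
        Finset.sum_congr rfl (fun k _ => by ring)
      rw [h, sumPoly, hc]; ring
    -- sum of x^2
    have hV : ∑ i : Fin n, (x i)^2 = (n:ℝ)*((n:ℝ)^2-1)/12 := by
      rw [hxdef]
      rw [Fin.sum_univ_eq_sum_range (fun k : ℕ => ((k:ℝ) - c)^2)]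
      have h : ∑ k ∈ Finset.range n, ((k:ℝ) - c)^2
          = ∑ k ∈ Finset.range n, (c^2 + (-2*c)*(k:ℝ) + 1*(k:ℝ)^2 + 0*(k:ℝ)^3) :=
        Finset.sum_congr rfl (fun k _ => by ring)
      rw [h, sumPoly, hc]; ring
    have hVpos : 0 < (n:ℝ)*((n:ℝ)^2-1)/12 := by nlinarith
    set v : ℝ := Real.sqrt ((n:ℝ)*((n:ℝ)^2-1)/12) with hvdef
    have hv2 : v^2 = (n:ℝ)*((n:ℝ)^2-1)/12 := Real.sq_sqrt hVpos.le
    have hvpos : 0 < v := Real.sqrt_pos.mpr hVpos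
    set y : Fin n → ℝ := fun i => x i / v with hydef
    -- quadratic form on x
    have hSsymm : ∀ i j : Fin n, S i j = S j i := by
      intro i j; rw [hS, hS, abs_sub_comm]
    have h1 : ∑ i : Fin n, ∑ j : Fin n, x i * L i j * x j
        = (∑ i : Fin n, d i * (x i)^2) - ∑ i : Fin n, ∑ j : Fin n, S i j * (x i * x j) := by
      have e1 : ∀ i j : Fin n, x i * L i j * x j
          = (if j = i then d i * (x i)^2 else 0) - S i j * (x i * x j) := by
        intro i j; rw [hL]
        rcases eq_or_ne i j with h | h
        · subst h; simp only [if_pos rfl]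
          simp only [ite_true, eq_self_iff_true, if_true]; ring
        · rw [if_neg h, if_neg (Ne.symm h)]; ring
      have : ∀ i : Fin n, ∑ j : Fin n, x i * L i j * x j
          = d i * (x i)^2 - ∑ j : Fin n, S i j * (x i * x j) := by
        intro i
        rw [Finset.sum_congr rfl (fun j _ => e1 i j), Finset.sum_sub_distrib,
          Finset.sum_ite_eq' Finset.univ i (fun _ => d i * (x i)^2), if_pos (Finset.mem_univ i)]
      rw [Finset.sum_congr rfl (fun i _ => this i), Finset.sum_sub_distrib]
    have hrow : ∀ i : Fin n, ∑ j : Fin n, S i j * (x i)^2 = d i * (x i)^2 := by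
      intro i; rw [← Finset.sum_mul, ← hd i]
    have hcol : ∑ i : Fin n, ∑ j : Fin n, S i j * (x j)^2 = ∑ i : Fin n, d i * (x i)^2 := by
      rw [Finset.sum_comm]
      refine Finset.sum_congr rfl (fun j _ => ?_)
      calc ∑ i : Fin n, S i j * (x j)^2 = ∑ i : Fin n, S j i * (x j)^2 :=
            Finset.sum_congr rfl (fun i _ => by rw [hSsymm i j])
        _ = d j * (x j)^2 := by rw [← Finset.sum_mul, ← hd j]
    have h2 : ∑ i : Fin n, ∑ j : Fin n, S i j * (x i - x j)^2
        = 2*(∑ i : Fin n, d i * (x i)^2) - 2 * ∑ i : Fin n, ∑ j : Fin n, S i j * (x i * x j) := by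
      have e2 : ∀ i j : Fin n, S i j * (x i - x j)^2
          = S i j * (x i)^2 - 2*(S i j * (x i * x j)) + S i j * (x j)^2 := by
        intro i j; ring
      calc ∑ i : Fin n, ∑ j : Fin n, S i j * (x i - x j)^2
          = ∑ i : Fin n, ∑ j : Fin n, (S i j * (x i)^2 - 2*(S i j * (x i * x j)) + S i j * (x j)^2) := by
            exact Finset.sum_congr rfl (fun i _ => Finset.sum_congr rfl (fun j _ => e2 i j))
        _ = (∑ i : Fin n, ∑ j : Fin n, S i j * (x i)^2)
            - 2*(∑ i : Fin n, ∑ j : Fin n, S i j * (x i * x j))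
            + ∑ i : Fin n, ∑ j : Fin n, S i j * (x j)^2 := by
            simp only [Finset.sum_add_distrib, Finset.sum_sub_distrib, Finset.mul_sum]
        _ = 2*(∑ i : Fin n, d i * (x i)^2) - 2 * ∑ i : Fin n, ∑ j : Fin n, S i j * (x i * x j) := by
            rw [Finset.sum_congr rfl (fun i _ => hrow i), hcol]; ring
    -- closed form for the symmetric quadratic form
    have h3 : ∑ i : Fin n, ∑ j : Fin n, S i j * (x i - x j)^2 = ((n:ℝ)^5 - (n:ℝ))/15 := by
      have e3 : ∀ i j : Fin n, S i j * (x i - x j)^2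
          = (n:ℝ) * ((i:ℝ)-(j:ℝ))^2 - |(i:ℝ)-(j:ℝ)| * ((i:ℝ)-(j:ℝ))^2 := by
        intro i j; rw [hS, hxdef]; ring
      calc ∑ i : Fin n, ∑ j : Fin n, S i j * (x i - x j)^2
          = ∑ i : Fin n, ∑ j : Fin n, ((n:ℝ) * ((i:ℝ)-(j:ℝ))^2 - |(i:ℝ)-(j:ℝ)| * ((i:ℝ)-(j:ℝ))^2) :=
            Finset.sum_congr rfl (fun i _ => Finset.sum_congr rfl (fun j _ => e3 i j))
        _ = ∑ i ∈ Finset.range n, ∑ j ∈ Finset.range n,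
              ((n:ℝ) * ((i:ℝ)-(j:ℝ))^2 - |(i:ℝ)-(j:ℝ)| * ((i:ℝ)-(j:ℝ))^2) := by
            rw [Fin.sum_univ_eq_sum_range (fun i : ℕ => ∑ j : Fin n,
              ((n:ℝ) * ((i:ℝ)-(j:ℝ))^2 - |(i:ℝ)-(j:ℝ)| * ((i:ℝ)-(j:ℝ))^2))]
            exact Finset.sum_congr rfl (fun i _ => Fin.sum_univ_eq_sum_range
              (fun j : ℕ => ((n:ℝ) * ((i:ℝ)-(j:ℝ))^2 - |(i:ℝ)-(j:ℝ)| * ((i:ℝ)-(j:ℝ))^2)) n)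
        _ = (n:ℝ) * (∑ i ∈ Finset.range n, ∑ j ∈ Finset.range n, ((i:ℝ)-(j:ℝ))^2)
            - ∑ i ∈ Finset.range n, ∑ j ∈ Finset.range n, |(i:ℝ)-(j:ℝ)| * ((i:ℝ)-(j:ℝ))^2 := by
            simp only [Finset.sum_sub_distrib, Finset.mul_sum]
        _ = ((n:ℝ)^5 - (n:ℝ))/15 := by rw [T2lem, Glem]; ring
    have hQ : ∑ i : Fin n, ∑ j : Fin n, x i * L i j * x j = ((n:ℝ)^5 - (n:ℝ))/30 := by
      have : (∑ i : Fin n, d i * (x i)^2) - ∑ i : Fin n, ∑ j : Fin n, S i j * (x i * x j)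
          = ((n:ℝ)^5 - (n:ℝ))/30 := by
        rw [h3] at h2; linarith
      rw [h1, this]
    -- the witness y
    have hy0 : ∑ i : Fin n, y i = 0 := by
      rw [hydef]; simp only
      rw [← Finset.sum_div, hx0, zero_div]
    have hy1 : ∑ i : Fin n, (y i)^2 = 1 := by
      rw [hydef]; simp only [div_pow]
      rw [← Finset.sum_div, hV, hv2]
      exact div_self hVpos.ne'
    have hyq : ∑ i : Fin n, ∑ j : Fin n, y i * L i j * y j = (2/5) * ((n:ℝ)^2 + 1) := by
      have e4 : ∀ i j : Fin n, y i * L i j * y j = (x i * L i j * x j) / v^2 := by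
        intro i j; rw [hydef]; simp only [pow_two]
        ring
      calc ∑ i : Fin n, ∑ j : Fin n, y i * L i j * y j
          = (∑ i : Fin n, ∑ j : Fin n, x i * L i j * x j) / v^2 := by
            simp only [Finset.sum_div]
            exact Finset.sum_congr rfl (fun i _ => Finset.sum_congr rfl (fun j _ => e4 i j))
        _ = (2/5) * ((n:ℝ)^2 + 1) := by
            rw [hQ, hv2]
            rw [div_eq_iff (by positivity : ((n:ℝ)*((n:ℝ)^2-1)/12) ≠ 0)]
            ring
    exact csInf_le hb ⟨y, hy0, hy1, hyq.symm⟩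
end

section
/- Let f, f̃ ∈ ℝⁿ with f strictly increasing (the true Fiedler vector, identity ranking) and suppose ‖f̃ - f‖_∞ ≤ |f_j - f_i|/2 for a pair i < j. Then f̃_j ≥ f̃_i. Consequently, if π̃ is the ranking obtained by sorting f̃ and π the identity ranking, then for every i₀, |π̃_{i₀} - π_{i₀}| ≤ 2·#{j : |f_j - f_{i₀}| < 2‖f̃ - f‖_∞}. -/
open scoped Classical

/-- If `f` is strictly increasing and `‖f̃ - f‖_∞ ≤ |f j - f i|/2`
for a pair `i < j`, then `f̃ j ≥ f̃ i`. Consequently the displacement of the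
ranking obtained by sorting `f̃` satisfies
`|π̃ i₀ - π i₀| ≤ 2 · #{j : |f j - f i₀| < 2‖f̃ - f‖_∞}`. -/
theorem ranking_displacement_bound (n : ℕ) (f ftil : Fin n → ℝ)
    (hf : StrictMono f) :
    (∀ i j : Fin n, i < j →
      (∀ k : Fin n, |ftil k - f k| ≤ |f j - f i| / 2) → ftil i ≤ ftil j) ∧
    (∀ M : ℝ, (∀ k : Fin n, |ftil k - f k| ≤ M) →
      ∀ i₀ : Fin n,
        ((Finset.univ.filter fun j : Fin n => j < i₀ ∧ ftil i₀ < ftil j).card +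
          (Finset.univ.filter fun j : Fin n => i₀ < j ∧ ftil j < ftil i₀).card : ℕ)
          ≤ 2 * (Finset.univ.filter fun j : Fin n => |f j - f i₀| < 2 * M).card) := by
  constructor
  · intro i j hij hk
    have hfij : f i < f j := hf hij
    have habs : |f j - f i| = f j - f i := abs_of_pos (by linarith)
    have h1 := abs_le.1 (hk i)
    have h2 := abs_le.1 (hk j)
    rw [habs] at h1 h2
    linarith [h1.2, h2.1]
  · intro M hM i₀
    have key : ∀ j : Fin n, (j < i₀ ∧ ftil i₀ < ftil j) ∨ (i₀ < j ∧ ftil j < ftil i₀) →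
        |f j - f i₀| < 2 * M := by
      rintro j (⟨hj, ht⟩ | ⟨hj, ht⟩)
      · have hfij : f j < f i₀ := hf hj
        have h1 := abs_le.1 (hM j)
        have h2 := abs_le.1 (hM i₀)
        rw [abs_of_neg (by linarith)]
        linarith [h1.2, h2.1]
      · have hfij : f i₀ < f j := hf hj
        have h1 := abs_le.1 (hM j)
        have h2 := abs_le.1 (hM i₀)
        rw [abs_of_pos (by linarith)]
        linarith [h1.1, h2.2]
    have s1 : (Finset.univ.filter fun j : Fin n => j < i₀ ∧ ftil i₀ < ftil j) ⊆
        Finset.univ.filter fun j : Fin n => |f j - f i₀| < 2 * M := by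
      intro j hj
      simp only [Finset.mem_filter, Finset.mem_univ, true_and] at hj ⊢
      exact key j (Or.inl hj)
    have s2 : (Finset.univ.filter fun j : Fin n => i₀ < j ∧ ftil j < ftil i₀) ⊆
        Finset.univ.filter fun j : Fin n => |f j - f i₀| < 2 * M := by
      intro j hj
      simp only [Finset.mem_filter, Finset.mem_univ, true_and] at hj ⊢
      exact key j (Or.inr hj)
    have := Finset.card_le_card s1
    have := Finset.card_le_card s2
    omega
end

section
/- In the generalized linear model with distinct skill parameters ν₁ > ν₂ > … > ν_n, the limit similarity matrix S with S_{i,j} = Σ_{k=1}^n (1 - |P_{i,k} - P_{j,k}|), where P_{i,j} = H(ν_i - ν_j), satisfies the strict Robinson inequalities: S_{i+1,j} < S_{i,j} and S_{i,j-1} < S_{i,j} for all i > j. -/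
/-- In the generalized linear model with strictly decreasing
skill parameters, the limit similarity matrix
`S i j = ∑ k (1 - |P i k - P j k|)` with `P i j = H (ν i - ν j)` satisfies the
strict Robinson inequalities `S (i+1) j < S i j` and `S i (j-1) < S i j` for
`i > j`. -/
theorem glm_similarity_strictR (n : ℕ) (H : ℝ → ℝ)
    (hH : StrictMono H) (hH01 : ∀ x : ℝ, 0 ≤ H x ∧ H x ≤ 1)
    (hHsym : ∀ x : ℝ, H (-x) = 1 - H x)
    (ν : Fin n → ℝ) (hν : StrictAnti ν)
    (P : Fin n → Fin n → ℝ) (hP : ∀ i j : Fin n, P i j = H (ν i - ν j))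
    (S : Fin n → Fin n → ℝ)
    (hS : ∀ i j : Fin n, S i j = ∑ k : Fin n, (1 - |P i k - P j k|)) :
    ∀ i j : Fin n, j < i →
      (∀ ip : Fin n, (ip : ℕ) = (i : ℕ) + 1 → S ip j < S i j) ∧
      (∀ jm : Fin n, (jm : ℕ) + 1 = (j : ℕ) → S i jm < S i j) := by
  intro i j hji
  have key : ∀ a b : Fin n, a < b → ∀ k : Fin n, P b k < P a k := by
    intro a b hab k
    rw [hP, hP]
    exact hH (by have := hν hab; linarith)
  have hne : (Finset.univ : Finset (Fin n)).Nonempty := ⟨i, Finset.mem_univ i⟩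
  constructor
  · intro ip hip
    have hiip : i < ip := Fin.lt_def.mpr (by omega)
    have hjip : j < ip := lt_trans hji hiip
    rw [hS, hS]
    apply Finset.sum_lt_sum_of_nonempty hne
    intro k _
    have h1 := key j i hji k
    have h2 := key j ip hjip k
    have h3 := key i ip hiip k
    rw [abs_of_nonpos (by linarith), abs_of_nonpos (by linarith)]
    linarith
  · intro jm hjm
    have hjmj : jm < j := Fin.lt_def.mpr (by omega)
    have hjmi : jm < i := lt_trans hjmj hji
    rw [hS, hS]
    apply Finset.sum_lt_sum_of_nonempty hne
    intro k _
    have h1 := key j i hji k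
    have h2 := key jm i hjmi k
    have h3 := key jm j hjmj k
    rw [abs_of_nonpos (by linarith), abs_of_nonpos (by linarith)]
    linarith
end
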